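/- Let k ≥ 1 and let P be a k-Dyck path of length n, corresponding to the ascending parking preference (a_1,…,a_n) in which a_i equals 1 plus the number of Down steps of P occurring before the i-th Up step. Then (a_1,…,a_n) is a k-Naples parking function if and only if for every step of P that is a Down step taking the partial sum from 0 to −1, there exists a later step, occurring within the next 2k steps, after which the partial sum of P is strictly positive. -/

import Mathlib

/-- The spots a car with preference `p` checks backward: `p-1, p-2, …, max(p-k,1)`. -/
def backCandidates (k p : ℕ) : List ℕ :=
  ((List.range k).map (fun i => p - (i + 1))).filter (fun s => decide (1 ≤ s))

/-- The spots a car with preference `p` checks when driving forward: `p+1, …, n`. -/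
def fwdCandidates (n p : ℕ) : List ℕ :=
  List.range' (p + 1) (n - p)

/-- The spot in which a car with preference `p` parks under the `k`-Naples rule on a
one-way street with `n` spots, given the set `occ` of already occupied spots
(`none` if the car fails to park). -/
def naplesStep (k n : ℕ) (occ : Finset ℕ) (p : ℕ) : Option ℕ :=
  if p ∈ occ then
    match (backCandidates k p).filter (fun s => decide (s ∉ occ)) with
    | s :: _ => some s
    | [] =>
      match (fwdCandidates n p).filter (fun s => decide (s ∉ occ)) with
      | s :: _ => some s
      | [] => none
  else some p

/-- Runs the `k`-Naples parking process starting from occupied set `occ` for cars with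
the given list of preferences.  Returns the list of spots in which the successive cars
park, or `none` if some car fails to park. -/
def naplesSpots (k n : ℕ) : Finset ℕ → List ℕ → Option (List ℕ)
  | _, [] => some []
  | occ, p :: rest =>
    match naplesStep k n occ p with
    | none => none
    | some s => (naplesSpots k n (insert s occ) rest).map (fun l => s :: l)

/-- All cars with the given preferences successfully park, starting from occupied set `occ`. -/
def ParksAllFrom (k n : ℕ) (occ : Finset ℕ) (prefs : List ℕ) : Prop :=
  (naplesSpots k n occ prefs).isSome

/-- A parking preference of length `n`: a list of `n` numbers in `{1, …, n}`. -/
def IsParkingPref (n : ℕ) (prefs : List ℕ) : Prop :=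
  prefs.length = n ∧ ∀ p ∈ prefs, 1 ≤ p ∧ p ≤ n

/-- A `k`-Naples parking function of length `n`. -/
def IsNaplesPF (k n : ℕ) (prefs : List ℕ) : Prop :=
  IsParkingPref n prefs ∧ ParksAllFrom k n ∅ prefs

/-- Signed sum of a list of steps (`true` = Up `+1`, `false` = Down `-1`). -/
def psum (P : List Bool) : ℤ :=
  (P.map (fun b => if b then (1 : ℤ) else -1)).sum

/-- A Dyck path of length `n`: `n` Up and `n` Down steps, all partial sums `≥ 0`. -/
def IsDyckPath (n : ℕ) (P : List Bool) : Prop :=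
  P.length = 2 * n ∧ P.count true = n ∧ ∀ t ≤ P.length, 0 ≤ psum (P.take t)

/-- A `k`-Dyck path of length `n`: `n` Up and `n` Down steps, all partial sums `≥ -k`,
ending with a Down step. -/
def IsKDyckPath (k n : ℕ) (P : List Bool) : Prop :=
  P.length = 2 * n ∧ P.count true = n ∧ (∀ t ≤ P.length, -(k : ℤ) ≤ psum (P.take t)) ∧
    P.getLast? = some false

/-- The ascending parking preference corresponding to a path: the `i`-th entry is
`1` plus the number of Down steps before the `i`-th Up step. -/
def prefsOfPath (P : List Bool) : List ℕ :=
  ((List.range P.length).filter (fun j => P.getD j false)).map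
    (fun j => 1 + (P.take j).count false)

lemma mem_backCandidates {k p x : ℕ} : x ∈ backCandidates k p ↔ 1 ≤ x ∧ p - k ≤ x ∧ x < p := by
  simp only [backCandidates, List.mem_filter, List.mem_map, List.mem_range, decide_eq_true_eq]
  constructor
  · rintro ⟨⟨i, hi, rfl⟩, h1⟩; omega
  · rintro ⟨h1, h2, h3⟩; exact ⟨⟨p - x - 1, by omega, by omega⟩, h1⟩

lemma mem_fwdCandidates {n p x : ℕ} : x ∈ fwdCandidates n p ↔ p < x ∧ x ≤ n := by
  simp only [fwdCandidates, List.mem_range']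
  constructor
  · rintro ⟨i, hi, rfl⟩; omega
  · rintro ⟨h1, h2⟩; exact ⟨x - p - 1, by omega, by omega⟩

lemma backCandidates_pairwise (k p : ℕ) : (backCandidates k p).Pairwise (· > ·) := by
  have h1 : ((List.range k).map (fun i => p - (i + 1))).Pairwise
      (fun a b => 1 ≤ b → a > b) := by
    rw [List.pairwise_map]
    exact (List.pairwise_lt_range (n := k)).imp_of_mem (by intro a b _ _ hab hb; omega)
  refine (h1.filter _).imp_of_mem ?_
  intro a b _ hb hab
  have : 1 ≤ b := by simpa using (List.mem_filter.1 hb).2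
  exact hab this

lemma fwdCandidates_pairwise (n p : ℕ) : (fwdCandidates n p).Pairwise (· < ·) :=
  List.pairwise_lt_range' _ Nat.one_pos

lemma filter_head_gt {l : List ℕ} {q : ℕ → Bool} {s : ℕ} {rest : List ℕ}
    (hpw : l.Pairwise (· > ·)) (h : l.filter q = s :: rest) :
    s ∈ l ∧ q s = true ∧ ∀ x ∈ l, s < x → q x = false := by
  induction l with
  | nil => simp at h
  | cons a l ih =>
    rcases List.pairwise_cons.1 hpw with ⟨ha, hl⟩
    by_cases hqa : q a
    · rw [List.filter_cons_of_pos hqa] at h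
      obtain ⟨rfl, -⟩ : a = s ∧ l.filter q = rest := List.cons.inj h
      refine ⟨List.mem_cons_self, hqa, ?_⟩
      intro x hx hsx
      rcases List.mem_cons.1 hx with rfl | hx
      · omega
      · exact absurd (ha x hx) (by omega)
    · rw [List.filter_cons_of_neg hqa] at h
      obtain ⟨h1, h2, h3⟩ := ih hl h
      refine ⟨List.mem_cons_of_mem _ h1, h2, ?_⟩
      intro x hx hsx
      rcases List.mem_cons.1 hx with rfl | hx
      · exact eq_false_of_ne_true hqa
      · exact h3 x hx hsx

lemma filter_head_lt {l : List ℕ} {q : ℕ → Bool} {s : ℕ} {rest : List ℕ}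
    (hpw : l.Pairwise (· < ·)) (h : l.filter q = s :: rest) :
    s ∈ l ∧ q s = true ∧ ∀ x ∈ l, x < s → q x = false := by
  induction l with
  | nil => simp at h
  | cons a l ih =>
    rcases List.pairwise_cons.1 hpw with ⟨ha, hl⟩
    by_cases hqa : q a
    · rw [List.filter_cons_of_pos hqa] at h
      obtain ⟨rfl, -⟩ : a = s ∧ l.filter q = rest := List.cons.inj h
      refine ⟨List.mem_cons_self, hqa, ?_⟩
      intro x hx hsx
      rcases List.mem_cons.1 hx with rfl | hx
      · omega
      · exact absurd (ha x hx) (by omega)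
    · rw [List.filter_cons_of_neg hqa] at h
      obtain ⟨h1, h2, h3⟩ := ih hl h
      refine ⟨List.mem_cons_of_mem _ h1, h2, ?_⟩
      intro x hx hsx
      rcases List.mem_cons.1 hx with rfl | hx
      · exact eq_false_of_ne_true hqa
      · exact h3 x hx hsx

/-- Specification of a successful parking step. -/
lemma naplesStep_some_spec {k n : ℕ} {occ : Finset ℕ} {p s₀ : ℕ}
    (h : naplesStep k n occ p = some s₀) :
    s₀ ∉ occ ∧
    ((p ∉ occ ∧ s₀ = p) ∨
     (p ∈ occ ∧ 1 ≤ s₀ ∧ p - k ≤ s₀ ∧ s₀ < p ∧ ∀ x, s₀ < x → x < p → x ∈ occ) ∨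
     (p ∈ occ ∧ (∀ x, 1 ≤ x → p - k ≤ x → x < p → x ∈ occ) ∧
        p < s₀ ∧ s₀ ≤ n ∧ ∀ x, p < x → x < s₀ → x ∈ occ)) := by
  unfold naplesStep at h
  by_cases hp : p ∈ occ
  · rw [if_pos hp] at h
    rcases hb : (backCandidates k p).filter (fun s => decide (s ∉ occ)) with _ | ⟨s, rest⟩
    · rw [hb] at h
      rcases hf : (fwdCandidates n p).filter (fun s => decide (s ∉ occ)) with _ | ⟨s, rest⟩
      · rw [hf] at h; simp at h
      · rw [hf] at h
        obtain rfl : s = s₀ := by simpa using h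
        obtain ⟨hmem, hq, hfirst⟩ := filter_head_lt (fwdCandidates_pairwise n p) hf
        have hback : ∀ x, 1 ≤ x → p - k ≤ x → x < p → x ∈ occ := by
          intro x h1 h2 h3
          have := (List.filter_eq_nil_iff.1 hb) x (mem_backCandidates.2 ⟨h1, h2, h3⟩)
          simpa using this
        rcases mem_fwdCandidates.1 hmem with ⟨hps, hsn⟩
        refine ⟨by simpa using hq, Or.inr (Or.inr ⟨hp, hback, hps, hsn, ?_⟩)⟩
        intro x hx1 hx2
        have := hfirst x (mem_fwdCandidates.2 ⟨hx1, by omega⟩) hx2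
        simpa using this
    · rw [hb] at h
      obtain rfl : s = s₀ := by simpa using h
      obtain ⟨hmem, hq, hfirst⟩ := filter_head_gt (backCandidates_pairwise k p) hb
      rcases mem_backCandidates.1 hmem with ⟨h1, h2, h3⟩
      refine ⟨by simpa using hq, Or.inr (Or.inl ⟨hp, h1, h2, h3, ?_⟩)⟩
      intro x hx1 hx2
      have := hfirst x (mem_backCandidates.2 ⟨by omega, by omega, hx2⟩) hx1
      simpa using this
  · rw [if_neg hp] at h
    obtain rfl : p = s₀ := by simpa using h
    exact ⟨hp, Or.inl ⟨hp, rfl⟩⟩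

/-- Specification of a failing parking step. -/
lemma naplesStep_none_spec {k n : ℕ} {occ : Finset ℕ} {p : ℕ}
    (h : naplesStep k n occ p = none) :
    p ∈ occ ∧ (∀ x, 1 ≤ x → p - k ≤ x → x < p → x ∈ occ) ∧
      (∀ x, p < x → x ≤ n → x ∈ occ) := by
  unfold naplesStep at h
  by_cases hp : p ∈ occ
  · rw [if_pos hp] at h
    rcases hb : (backCandidates k p).filter (fun s => decide (s ∉ occ)) with _ | ⟨s, rest⟩
    · rw [hb] at h
      rcases hf : (fwdCandidates n p).filter (fun s => decide (s ∉ occ)) with _ | ⟨s, rest⟩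
      · refine ⟨hp, ?_, ?_⟩
        · intro x h1 h2 h3
          have := (List.filter_eq_nil_iff.1 hb) x (mem_backCandidates.2 ⟨h1, h2, h3⟩)
          simpa using this
        · intro x h1 h2
          have := (List.filter_eq_nil_iff.1 hf) x (mem_fwdCandidates.2 ⟨h1, h2⟩)
          simpa using this
      · rw [hf] at h; simp at h
    · rw [hb] at h; simp at h
  · rw [if_neg hp] at h; simp at h

/-- Total parking step: on failure leaves the occupied set unchanged. -/
def stepOcc (k n : ℕ) (occ : Finset ℕ) (p : ℕ) : Finset ℕ :=
  match naplesStep k n occ p with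
  | none => occ
  | some s => insert s occ

/-- All cars in the list park successfully. -/
def okRun (k n : ℕ) : Finset ℕ → List ℕ → Prop
  | _, [] => True
  | occ, p :: rest => ∃ s, naplesStep k n occ p = some s ∧ okRun k n (insert s occ) rest

lemma okRun_nil (k n : ℕ) (occ : Finset ℕ) : okRun k n occ [] := trivial

lemma okRun_cons (k n : ℕ) (occ : Finset ℕ) (p : ℕ) (rest : List ℕ) :
    okRun k n occ (p :: rest) ↔
      ∃ s, naplesStep k n occ p = some s ∧ okRun k n (insert s occ) rest := Iff.rfl

lemma naplesSpots_isSome_iff_okRun (k n : ℕ) (l : List ℕ) (occ : Finset ℕ) :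
    (naplesSpots k n occ l).isSome ↔ okRun k n occ l := by
  induction l generalizing occ with
  | nil => simp [naplesSpots, okRun]
  | cons p rest ih =>
    unfold naplesSpots
    rw [okRun_cons]
    rcases h : naplesStep k n occ p with _ | s
    · simp [h]
    · simp only [h, Option.some.injEq]
      rw [show ((naplesSpots k n (insert s occ) rest).map fun l => s :: l).isSome
          = (naplesSpots k n (insert s occ) rest).isSome from Option.isSome_map ..]
      rw [ih (insert s occ)]
      constructor
      · intro hok; exact ⟨s, rfl, hok⟩
      · rintro ⟨s', hs', hok⟩; obtain rfl : s = s' := by omega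
        exact hok

lemma okRun_append (k n : ℕ) (l₁ l₂ : List ℕ) (occ : Finset ℕ) :
    okRun k n occ (l₁ ++ l₂) ↔ okRun k n occ l₁ ∧ okRun k n (l₁.foldl (stepOcc k n) occ) l₂ := by
  induction l₁ generalizing occ with
  | nil => simp [okRun]
  | cons p rest ih =>
    rw [List.cons_append, okRun_cons, okRun_cons]
    rcases h : naplesStep k n occ p with _ | s
    · simp
    · simp only [List.foldl_cons, stepOcc, h, Option.some.injEq]
      constructor
      · rintro ⟨s', hs', h2⟩
        obtain rfl : s = s' := by omega
        exact ⟨⟨s, rfl, ((ih _).1 h2).1⟩, ((ih _).1 h2).2⟩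
      · rintro ⟨⟨s', hs', h1⟩, h2⟩
        obtain rfl : s = s' := by omega
        exact ⟨s, rfl, (ih _).2 ⟨h1, h2⟩⟩

lemma prefsOfPath_snoc (l : List Bool) (b : Bool) :
    prefsOfPath (l ++ [b]) =
      prefsOfPath l ++ (if b then [1 + l.count false] else []) := by
  unfold prefsOfPath
  rw [List.length_append, List.length_singleton, List.range_succ, List.filter_append,
    List.map_append]
  congr 1
  · have h1 : (List.range l.length).filter (fun j => (l ++ [b]).getD j false)
        = (List.range l.length).filter (fun j => l.getD j false) := by
      apply List.filter_congr
      intro j hj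
      rw [List.getD_append _ _ _ _ (List.mem_range.1 hj)]
    rw [h1]
    apply List.map_congr_left
    intro j hj
    have hj' : j < l.length := List.mem_range.1 (List.mem_of_mem_filter hj)
    rw [List.take_append_of_le_length (le_of_lt hj')]
  · have hget : (l ++ [b]).getD l.length false = b := by
      rw [List.getD_eq_getElem?_getD, List.getElem?_append_right (le_refl _)]
      simp
    by_cases hb : b
    · subst hb
      rw [List.filter_cons, List.filter_nil]
      simp only [hget]
      simp only [if_pos rfl, List.map_cons, List.map_nil, if_pos trivial]
      rw [List.take_append_of_le_length (le_refl _), List.take_length]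
    · simp only [Bool.not_eq_true] at hb
      subst hb
      rw [List.filter_cons, List.filter_nil]
      simp [hget]

lemma prefsOfPath_nil : prefsOfPath [] = [] := by simp [prefsOfPath]

/-- Occupied set after processing the first `t` steps of the path. -/
def occT (k n : ℕ) (P : List Bool) (t : ℕ) : Finset ℕ :=
  (prefsOfPath (P.take t)).foldl (stepOcc k n) ∅

/-- All cars among the first `t` steps of the path park successfully. -/
def okT (k n : ℕ) (P : List Bool) (t : ℕ) : Prop :=
  okRun k n ∅ (prefsOfPath (P.take t))

lemma occT_zero (k n : ℕ) (P : List Bool) : occT k n P 0 = ∅ := by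
  simp [occT, prefsOfPath_nil]

lemma okT_zero (k n : ℕ) (P : List Bool) : okT k n P 0 := by
  simp [okT, prefsOfPath_nil, okRun]

lemma take_succ_eq (P : List Bool) (t : ℕ) :
    P.take (t + 1) = P.take t ++ (P[t]?).toList := List.take_succ

lemma occT_succ_up {k n : ℕ} {P : List Bool} {t : ℕ} (h : P[t]? = some true) :
    occT k n P (t + 1) = stepOcc k n (occT k n P t) (1 + (P.take t).count false) := by
  unfold occT
  rw [take_succ_eq, h]
  rw [show (some true).toList = [true] from rfl, prefsOfPath_snoc, if_pos rfl,
    List.foldl_append]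
  rfl

lemma occT_succ_stall {k n : ℕ} {P : List Bool} {t : ℕ}
    (h : P[t]? = none ∨ P[t]? = some false) :
    occT k n P (t + 1) = occT k n P t := by
  unfold occT
  rw [take_succ_eq]
  rcases h with h | h <;> rw [h]
  · simp
  · rw [show (some false).toList = [false] from rfl, prefsOfPath_snoc]
    simp

lemma okT_succ_up {k n : ℕ} {P : List Bool} {t : ℕ} (h : P[t]? = some true) :
    okT k n P (t + 1) ↔
      okT k n P t ∧ naplesStep k n (occT k n P t) (1 + (P.take t).count false) ≠ none := by
  unfold okT
  rw [take_succ_eq, h, show (some true).toList = [true] from rfl, prefsOfPath_snoc, if_pos rfl,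
    okRun_append]
  simp only [okRun_cons]
  constructor
  · rintro ⟨h1, s, hs, -⟩
    refine ⟨h1, ?_⟩
    intro hnone
    rw [show occT k n P t = (prefsOfPath (P.take t)).foldl (stepOcc k n) ∅ from rfl] at hnone
    rw [hs] at hnone
    cases hnone
  · rintro ⟨h1, h2⟩
    refine ⟨h1, ?_⟩
    rcases hs : naplesStep k n ((prefsOfPath (P.take t)).foldl (stepOcc k n) ∅)
        (1 + (P.take t).count false) with _ | s
    · exact absurd hs h2
    · exact ⟨s, rfl, trivial⟩

lemma okT_succ_stall {k n : ℕ} {P : List Bool} {t : ℕ}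
    (h : P[t]? = none ∨ P[t]? = some false) :
    okT k n P (t + 1) ↔ okT k n P t := by
  unfold okT
  rw [take_succ_eq]
  rcases h with h | h <;> rw [h]
  · simp
  · rw [show (some false).toList = [false] from rfl, prefsOfPath_snoc]
    simp

lemma okT_mono {k n : ℕ} {P : List Bool} {t t' : ℕ} (h : t ≤ t') (h' : okT k n P t') :
    okT k n P t := by
  induction t' with
  | zero => exact Nat.le_zero.1 h ▸ h'
  | succ t' ih =>
    rcases Nat.lt_or_ge t (t' + 1) with h1 | h1
    · apply ih (by omega)
      rcases hg : P[t']? with _ | b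
      · exact (okT_succ_stall (Or.inl hg)).1 h'
      · rcases b with _ | _
        · exact (okT_succ_stall (Or.inr hg)).1 h'
        · exact ((okT_succ_up hg).1 h').1
    · exact (by omega : t = t' + 1) ▸ h'

lemma occT_mono {k n : ℕ} {P : List Bool} {t t' : ℕ} (h : t ≤ t') :
    occT k n P t ⊆ occT k n P t' := by
  induction t' with
  | zero => exact Nat.le_zero.1 h ▸ subset_rfl
  | succ t' ih =>
    rcases Nat.lt_or_ge t (t' + 1) with h1 | h1
    · refine subset_trans (ih (by omega)) ?_
      rcases hg : P[t']? with _ | b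
      · exact (occT_succ_stall (Or.inl hg)).symm ▸ subset_rfl
      · rcases b with _ | _
        · exact (occT_succ_stall (Or.inr hg)).symm ▸ subset_rfl
        · rw [occT_succ_up hg]
          unfold stepOcc
          rcases naplesStep k n (occT k n P t') (1 + (P.take t').count false) with _ | s
          · exact subset_rfl
          · exact Finset.subset_insert _ _
    · exact (by omega : t = t' + 1) ▸ subset_rfl

lemma psum_append (l₁ l₂ : List Bool) : psum (l₁ ++ l₂) = psum l₁ + psum l₂ := by
  simp [psum]

lemma count_true_add_count_false (l : List Bool) : l.count true + l.count false = l.length := by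
  induction l with
  | nil => simp
  | cons b l ih => cases b <;> simp [List.count_cons] <;> omega

lemma psum_eq_counts (l : List Bool) : psum l = (l.count true : ℤ) - (l.count false : ℤ) := by
  induction l with
  | nil => simp [psum]
  | cons b l ih => cases b <;> simp [psum, List.count_cons] at * <;> push_cast <;> omega

lemma count_take_succ (P : List Bool) (t : ℕ) (b : Bool) :
    (P.take (t+1)).count b = (P.take t).count b + ((P[t]?).toList).count b := by
  rw [List.take_succ, List.count_append]

lemma psum_take_succ (P : List Bool) (t : ℕ) :
    psum (P.take (t+1)) = psum (P.take t) + psum ((P[t]?).toList) := by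
  rw [List.take_succ, psum_append]

lemma count_take_mono (P : List Bool) (b : Bool) {t t' : ℕ} (h : t ≤ t') :
    (P.take t).count b ≤ (P.take t').count b := by
  induction t' with
  | zero => simp_all
  | succ t' ih =>
    rcases Nat.lt_or_ge t (t' + 1) with h1 | h1
    · exact le_trans (ih (by omega)) (by rw [count_take_succ]; omega)
    · exact (by omega : t = t' + 1) ▸ le_refl _

lemma length_take_of_le {P : List Bool} {t : ℕ} (h : t ≤ P.length) : (P.take t).length = t := by
  simp [List.length_take]; omega

lemma counts_add_eq {P : List Bool} {t : ℕ} (h : t ≤ P.length) :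
    (P.take t).count true + (P.take t).count false = t := by
  rw [count_true_add_count_false, length_take_of_le h]

lemma getElem?_lt_length {P : List Bool} {t : ℕ} {b : Bool} (h : P[t]? = some b) : t < P.length := by
  by_contra hc
  rw [List.getElem?_eq_none (by omega)] at h
  cases h

lemma exists_getElem {P : List Bool} {t : ℕ} (h : t < P.length) : ∃ b, P[t]? = some b := by
  rcases hb : P[t]? with _ | b
  · rw [List.getElem?_eq_none_iff] at hb; omega
  · exact ⟨b, rfl⟩

/-- Step relations depending on the kind of step. -/
lemma step_up {P : List Bool} {t : ℕ} (h : P[t]? = some true) :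
    (P.take (t+1)).count true = (P.take t).count true + 1 ∧
    (P.take (t+1)).count false = (P.take t).count false ∧
    psum (P.take (t+1)) = psum (P.take t) + 1 := by
  refine ⟨?_, ?_, ?_⟩
  · rw [count_take_succ, h]; rfl
  · rw [count_take_succ, h]; rfl
  · rw [psum_take_succ, h]; simp [psum]

lemma step_down {P : List Bool} {t : ℕ} (h : P[t]? = some false) :
    (P.take (t+1)).count true = (P.take t).count true ∧
    (P.take (t+1)).count false = (P.take t).count false + 1 ∧
    psum (P.take (t+1)) = psum (P.take t) - 1 := by
  refine ⟨?_, ?_, ?_⟩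
  · rw [count_take_succ, h]; rfl
  · rw [count_take_succ, h]; rfl
  · rw [psum_take_succ, h]; simp [psum]; ring

lemma step_none {P : List Bool} {t : ℕ} (h : P[t]? = none) :
    (P.take (t+1)).count true = (P.take t).count true ∧
    (P.take (t+1)).count false = (P.take t).count false ∧
    psum (P.take (t+1)) = psum (P.take t) := by
  refine ⟨?_, ?_, ?_⟩
  · rw [count_take_succ, h]; rfl
  · rw [count_take_succ, h]; rfl
  · rw [psum_take_succ, h]; simp [psum]

/-- The least time at which `j` Down steps have occurred. -/
lemma exists_tau {P : List Bool} {j T : ℕ} (hj : 1 ≤ j) (hT : j ≤ (P.take T).count false) :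
    ∃ τ, 1 ≤ τ ∧ τ ≤ T ∧ (P.take τ).count false = j ∧
      (P.take (τ-1)).count false = j - 1 ∧ P[τ-1]? = some false ∧
      ∀ t < τ, (P.take t).count false < j := by
  have hex : ∃ t, j ≤ (P.take t).count false := ⟨T, hT⟩
  set τ := Nat.find hex with hτdef
  have h1 : j ≤ (P.take τ).count false := Nat.find_spec hex
  have h2 : ∀ t < τ, (P.take t).count false < j := fun t ht => by
    have := Nat.find_min hex ht; omega
  have hτ1 : 1 ≤ τ := by
    rcases Nat.eq_zero_or_pos τ with h | h
    · exfalso; rw [h] at h1; simp at h1; omega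
    · exact h
  have hτT : τ ≤ T := Nat.find_min' hex hT
  have hprev : (P.take (τ-1)).count false ≤ j - 1 := by
    have := h2 (τ-1) (by omega); omega
  have hle : (P.take τ).count false ≤ (P.take (τ-1)).count false + 1 := by
    have : τ = (τ - 1) + 1 := by omega
    rw [this, count_take_succ]
    rcases hg : P[τ-1]? with _ | b
    · simp
    · cases b <;> simp [List.count_cons]
  have hgetf : P[τ-1]? = some false := by
    rcases hg : P[τ-1]? with _ | b
    · exfalso
      have : τ = (τ - 1) + 1 := by omega
      rw [this, count_take_succ, hg] at h1
      simp at h1; omega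
    · cases b
      · rfl
      · exfalso
        have : τ = (τ - 1) + 1 := by omega
        rw [this, count_take_succ, hg] at h1
        simp at h1; omega
  exact ⟨τ, hτ1, hτT, by omega, by omega, hgetf, h2⟩

section MainLemmas

variable {k n : ℕ} {P : List Bool}

lemma count_false_P (hlen : P.length = 2 * n) (hct : P.count true = n) :
    P.count false = n := by
  have := count_true_add_count_false P
  omega

lemma count_false_le (hlen : P.length = 2 * n) (hct : P.count true = n)
    (hlast : P.getLast? = some false) {t : ℕ} (h : P[t]? = some true) :
    (P.take t).count false + 1 ≤ n := by
  have htL : t < P.length := getElem?_lt_length h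
  have hlastget : P[P.length - 1]? = some false := by
    rw [← List.getLast?_eq_getElem?]; exact hlast
  have hne : t ≠ P.length - 1 := by
    intro hc; rw [hc, hlastget] at h; simp at h
  have hstep := (step_down hlastget).2.1
  have hfull : (P.take (P.length - 1 + 1)).count false = n := by
    have hL1 : P.length - 1 + 1 = P.length := by omega
    rw [hL1, List.take_length]
    exact count_false_P hlen hct
  have hmono : (P.take t).count false ≤ (P.take (P.length - 1)).count false :=
    count_take_mono P false (by omega)
  omega

lemma occT_card_and_subset (hlen : P.length = 2 * n) (hct : P.count true = n)
    (hlast : P.getLast? = some false) {T : ℕ} (hok : okT k n P T) :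
    ∀ t ≤ T, (occT k n P t).card = (P.take t).count true ∧ occT k n P t ⊆ Finset.Icc 1 n := by
  intro t
  induction t with
  | zero => intro _; simp [occT_zero]
  | succ t ih =>
    intro ht
    obtain ⟨ihc, ihs⟩ := ih (by omega)
    rcases hg : P[t]? with _ | b
    · rw [occT_succ_stall (Or.inl hg), (step_none hg).1]
      exact ⟨ihc, ihs⟩
    · cases b
      · rw [occT_succ_stall (Or.inr hg), (step_down hg).1]
        exact ⟨ihc, ihs⟩
      · have hok1 : okT k n P (t+1) := okT_mono ht hok
        obtain ⟨-, hne⟩ := (okT_succ_up hg).1 hok1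
        rcases hs : naplesStep k n (occT k n P t) (1 + (P.take t).count false) with _ | s₀
        · exact absurd hs hne
        · rw [occT_succ_up hg, stepOcc, hs]
          obtain ⟨hnotmem, hcases⟩ := naplesStep_some_spec hs
          have hpn : 1 + (P.take t).count false ≤ n := by
            have := count_false_le hlen hct hlast hg; omega
          have hs₀ : 1 ≤ s₀ ∧ s₀ ≤ n := by
            rcases hcases with ⟨-, rfl⟩ | ⟨-, h1, -, h2, -⟩ | ⟨-, -, h1, h2, -⟩ <;> omega
          constructor
          · rw [Finset.card_insert_of_notMem hnotmem, ihc, (step_up hg).1]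
          · exact Finset.insert_subset (Finset.mem_Icc.2 hs₀) ihs

lemma parksAll_iff_okT : ParksAllFrom k n ∅ (prefsOfPath P) ↔ okT k n P P.length := by
  rw [ParksAllFrom, naplesSpots_isSome_iff_okRun, okT, List.take_length]

lemma prefsOfPath_length (l : List Bool) : (prefsOfPath l).length = l.count true := by
  induction l using List.reverseRecOn with
  | nil => simp [prefsOfPath_nil]
  | append_singleton l b ih =>
    rw [prefsOfPath_snoc, List.length_append, ih, List.count_append]
    cases b <;> simp

lemma mem_prefsOfPath {l : List Bool} {p : ℕ} (h : p ∈ prefsOfPath l) :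
    ∃ t, l[t]? = some true ∧ p = 1 + (l.take t).count false := by
  induction l using List.reverseRecOn with
  | nil => rw [prefsOfPath_nil] at h; simp at h
  | append_singleton l b ih =>
    rw [prefsOfPath_snoc, List.mem_append] at h
    rcases h with h | h
    · obtain ⟨t, h1, h2⟩ := ih h
      have htl : t < l.length := getElem?_lt_length h1
      refine ⟨t, ?_, ?_⟩
      · rw [List.getElem?_append, if_pos htl]; exact h1
      · rw [List.take_append_of_le_length (le_of_lt htl)]; exact h2
    · cases b
      · simp at h
      · simp only [if_pos trivial, List.mem_singleton] at h
        refine ⟨l.length, ?_, ?_⟩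
        · rw [List.getElem?_concat_length]
        · rw [List.take_append_of_le_length (le_refl _), List.take_length]; exact h

lemma isParkingPref_of_path (hlen : P.length = 2 * n) (hct : P.count true = n)
    (hlast : P.getLast? = some false) : IsParkingPref n (prefsOfPath P) := by
  constructor
  · rw [prefsOfPath_length, hct]
  · intro p hp
    obtain ⟨t, h1, h2⟩ := mem_prefsOfPath hp
    have := count_false_le hlen hct hlast h1
    omega


lemma up_step_data {T : ℕ} (hok : okT k n P T) {t : ℕ} (ht : t + 1 ≤ T)
    (hg : P[t]? = some true) :
    ∃ s₀, naplesStep k n (occT k n P t) (1 + (P.take t).count false) = some s₀ ∧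
      occT k n P (t+1) = insert s₀ (occT k n P t) := by
  obtain ⟨-, hne⟩ := (okT_succ_up hg).1 (okT_mono ht hok)
  rcases hs : naplesStep k n (occT k n P t) (1 + (P.take t).count false) with _ | s₀
  · exact absurd hs hne
  · exact ⟨s₀, rfl, by rw [occT_succ_up hg, stepOcc, hs]⟩

lemma dir_forward (hlen : P.length = 2 * n) (hct : P.count true = n)
    (hlast : P.getLast? = some false) (hk : 1 ≤ k) (hok : okT k n P P.length) :
    ∀ t : ℕ, 1 ≤ t → t ≤ P.length → psum (P.take (t - 1)) = 0 →
        psum (P.take t) = -1 →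
        ∃ u : ℕ, t < u ∧ u ≤ t + 2 * k ∧ u ≤ P.length ∧ 0 < psum (P.take u) := by
  intro t₀ ht1 htL h0 hm1
  by_contra hno
  push_neg at hno
  have hno' : ∀ u, t₀ < u → u ≤ t₀ + 2 * k → u ≤ P.length → psum (P.take u) ≤ 0 := by
    intro u h1 h2 h3; exact hno u h1 h2 h3
  clear hno
  have hI2 := occT_card_and_subset hlen hct hlast (T := P.length) hok
  set L := P.length with hLdef
  set D0 := (P.take t₀).count false with hD0
  have hcc0 : (P.take t₀).count true + 1 = D0 := by
    have := psum_eq_counts (P.take t₀); omega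
  have htakeL : P.take L = P := by rw [hLdef]; exact List.take_length
  have hpsL : psum (P.take L) = 0 := by
    rw [htakeL]
    have h1 := psum_eq_counts P
    have h2 := count_false_P hlen hct
    omega
  have ht0L : t₀ < L := by
    rcases lt_or_eq_of_le htL with hc | hc
    · exact hc
    · rw [hc] at hm1; omega
  obtain ⟨w, hwa, hwb, hwcase⟩ : ∃ w, w ≤ t₀ + 2 * k ∧ w ≤ L ∧
      ((t₀ + 2 * k ≤ L ∧ w = t₀ + 2 * k) ∨ w = L) := by
    rcases le_total (t₀ + 2 * k) L with hc | hc
    · exact ⟨t₀ + 2 * k, le_refl _, hc, Or.inl ⟨hc, rfl⟩⟩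
    · exact ⟨L, hc, le_refl _, Or.inr rfl⟩
  have hwt : t₀ < w := by
    rcases hwcase with ⟨-, rfl⟩ | rfl <;> omega
  -- persistence of a free spot ≤ D0
  have pers : ∀ v, t₀ ≤ v → v ≤ w → ∃ h, 1 ≤ h ∧ h ≤ D0 ∧ h ∉ occT k n P v := by
    intro v hv
    induction v, hv using Nat.le_induction with
    | base =>
      intro _
      by_contra hall
      push_neg at hall
      have hsub : Finset.Icc 1 D0 ⊆ occT k n P t₀ := by
        intro x hx
        rcases Finset.mem_Icc.1 hx with ⟨h1, h2⟩
        exact hall x h1 h2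
      have hcard := Finset.card_le_card hsub
      rw [(hI2 t₀ (by omega)).1, Nat.card_Icc] at hcard
      omega
    | succ v hv ih =>
      intro hv1
      obtain ⟨h, hh1, hh2, hh3⟩ := ih (by omega)
      rcases hg : P[v]? with _ | b
      · exact ⟨h, hh1, hh2, by rwa [occT_succ_stall (Or.inl hg)]⟩
      · cases b
        · exact ⟨h, hh1, hh2, by rwa [occT_succ_stall (Or.inr hg)]⟩
        · obtain ⟨s₀, hs, hins⟩ := up_step_data hok (by omega) hg
          by_cases hsh : s₀ = h
          swap
          · exact ⟨h, hh1, hh2, by rw [hins]; simp [hsh]; tauto⟩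
          · subst hsh
            obtain ⟨hnm, hcases⟩ := naplesStep_some_spec hs
            have hddv : D0 ≤ (P.take v).count false := count_take_mono P false (by omega)
            have hplt : s₀ < 1 + (P.take v).count false := by omega
            rcases hcases with ⟨-, h2⟩ | ⟨hpm, hb1, hb2, hb3, hmid⟩ | ⟨-, -, h2, -⟩
            · omega
            swap
            · omega
            -- back-parking onto the witness spot
            by_cases hex : ∃ h', 1 ≤ h' ∧ h' ≤ D0 ∧ h' ≠ s₀ ∧ h' ∉ occT k n P v
            · obtain ⟨h', u1, u2, u3, u4⟩ := hex
              exact ⟨h', u1, u2, by rw [hins]; simp [u3]; tauto⟩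
            · exfalso
              push_neg at hex
              set p := 1 + (P.take v).count false with hp
              have hsub : Finset.Icc 1 p \ {s₀} ⊆ occT k n P v := by
                intro x hx
                rcases Finset.mem_sdiff.1 hx with ⟨hx1, hx2⟩
                rcases Finset.mem_Icc.1 hx1 with ⟨u1, u2⟩
                have hxne : x ≠ s₀ := by simpa using hx2
                rcases le_or_gt x D0 with hc | hc
                · exact hex x u1 hc hxne
                · rcases lt_or_eq_of_le u2 with hc2 | hc2
                  · exact hmid x (by omega) hc2
                  · rw [hc2]; exact hpm
              have hcard := Finset.card_le_card hsub
              have hsmem : s₀ ∈ Finset.Icc 1 p := Finset.mem_Icc.2 ⟨hb1, by omega⟩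
              rw [Finset.card_sdiff_of_subset (Finset.singleton_subset_iff.2 hsmem)] at hcard
              rw [Nat.card_Icc, Finset.card_singleton, (hI2 v (by omega)).1] at hcard
              -- so count true (take v) ≥ p - 1 = count false (take v)
              have hpsv : 0 ≤ psum (P.take v) := by
                have := psum_eq_counts (P.take v); omega
              rcases Nat.lt_or_ge t₀ v with hc | hc
              · have h1 := hno' v hc (by omega) (by omega)
                have h2 := (step_up hg).2.2
                have h3 := hno' (v+1) (by omega) (by omega) (by omega)
                omega
              · have : v = t₀ := by omega
                rw [this] at hpsv; omega
  obtain ⟨h, hh1, hh2, hh3⟩ := pers w (by omega) (le_refl _)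
  have hD0n : D0 ≤ n := by
    have h1 := count_take_mono P false htL
    rw [htakeL] at h1
    have := count_false_P hlen hct; omega
  have hoccL : occT k n P L = Finset.Icc 1 n := by
    refine Finset.eq_of_subset_of_card_le (hI2 L (le_refl _)).2 ?_
    rw [(hI2 L (le_refl _)).1, Nat.card_Icc, htakeL, hct]
    omega
  rcases hwcase with ⟨hcase, hwe⟩ | hwe
  · -- w = t₀ + 2k : the witness spot is dead, stays free to the end
    have hssw : psum (P.take w) ≤ 0 := hno' w hwt (by omega) hwb
    have hcw : (P.take w).count true + (P.take w).count false = w := counts_add_eq (by omega)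
    have hct0 : (P.take t₀).count true + (P.take t₀).count false = t₀ := counts_add_eq (by omega)
    have hmc : (P.take t₀).count true ≤ (P.take w).count true := count_take_mono P true (by omega)
    have hmd : D0 ≤ (P.take w).count false := count_take_mono P false (by omega)
    have hpw := psum_eq_counts (P.take w)
    have hdwk : D0 + k ≤ (P.take w).count false := by omega
    have hdead : ∀ v, w ≤ v → v ≤ L → h ∉ occT k n P v := by
      intro v hv
      induction v, hv using Nat.le_induction with
      | base => intro _; exact hh3
      | succ v hv ih =>
        intro hv1
        have ihh := ih (by omega)
        rcases hg : P[v]? with _ | b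
        · rwa [occT_succ_stall (Or.inl hg)]
        · cases b
          · rwa [occT_succ_stall (Or.inr hg)]
          · obtain ⟨s₀, hs, hins⟩ := up_step_data hok (by omega) hg
            obtain ⟨hnm, hcases⟩ := naplesStep_some_spec hs
            have hdm : (P.take w).count false ≤ (P.take v).count false :=
              count_take_mono P false (by omega)
            have hsne : s₀ ≠ h := by
              rcases hcases with ⟨-, h2⟩ | ⟨-, hb1, hb2, hb3, -⟩ | ⟨-, -, h2, -⟩ <;> omega
            intro hmem
            rw [hins] at hmem
            rcases Finset.mem_insert.1 hmem with h1 | h1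
            · exact hsne h1.symm
            · exact ihh h1
    exact hdead L hwb (le_refl _) (by rw [hoccL]; exact Finset.mem_Icc.2 ⟨hh1, by omega⟩)
  · -- w = L
    rw [hwe] at hh3
    exact hh3 (by rw [hoccL]; exact Finset.mem_Icc.2 ⟨hh1, by omega⟩)

lemma dir_backward (hlen : P.length = 2 * n) (hct : P.count true = n)
    (hlast : P.getLast? = some false) (hk : 1 ≤ k) (hnotok : ¬ okT k n P P.length) :
    ∃ t, 1 ≤ t ∧ t ≤ P.length ∧ psum (P.take (t - 1)) = 0 ∧ psum (P.take t) = -1 ∧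
      ∀ u, t < u → u ≤ t + 2 * k → u ≤ P.length → psum (P.take u) ≤ 0 := by
  classical
  have hex : ∃ t, ¬ okT k n P t := ⟨P.length, hnotok⟩
  set f := Nat.find hex with hfdef
  have hfspec : ¬ okT k n P f := Nat.find_spec hex
  have hfmin : ∀ t < f, okT k n P t := fun t ht => by
    have := Nat.find_min hex ht; tauto
  have hfL : f ≤ P.length := Nat.find_min' hex hnotok
  have hf1 : 1 ≤ f := by
    rcases Nat.eq_zero_or_pos f with h | h
    · exact absurd (h ▸ okT_zero k n P) hfspec
    · exact h
  have hokF : okT k n P (f - 1) := hfmin _ (by omega)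
  have hff : f - 1 + 1 = f := by omega
  have hgf : P[f-1]? = some true := by
    rcases hg : P[f-1]? with _ | b
    · exact absurd (hff ▸ (okT_succ_stall (Or.inl hg)).2 hokF) hfspec
    · cases b
      · exact absurd (hff ▸ (okT_succ_stall (Or.inr hg)).2 hokF) hfspec
      · rfl
  have hfail : naplesStep k n (occT k n P (f-1)) (1 + (P.take (f-1)).count false) = none := by
    rcases hs : naplesStep k n (occT k n P (f-1)) (1 + (P.take (f-1)).count false) with _ | s₀
    · rfl
    · exfalso
      refine hfspec (hff ▸ (okT_succ_up hgf).2 ⟨hokF, ?_⟩)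
      rw [hs]; simp
  obtain ⟨hpm, hback, hfwd⟩ := naplesStep_none_spec hfail
  have hI2 := occT_card_and_subset hlen hct hlast (T := f - 1) hokF
  obtain ⟨hcardF, hsubF⟩ := hI2 (f-1) (le_refl _)
  -- the occupied set is not everything
  have hccf : (P.take (f-1)).count true + 1 ≤ n := by
    have h1 := (step_up hgf).1
    have h2 : (P.take (f-1+1)).count true ≤ P.count true := by
      have := count_take_mono P true (show f - 1 + 1 ≤ P.length by omega)
      rwa [List.take_length] at this
    omega
  have hSne : (Finset.Icc 1 n \ occT k n P (f-1)).Nonempty := by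
    rw [← Finset.card_pos, Finset.card_sdiff_of_subset hsubF, Nat.card_Icc, hcardF]
    omega
  obtain ⟨j, hjmem, hjle⟩ : ∃ j, j ∈ Finset.Icc 1 n \ occT k n P (f-1) ∧
      ∀ x ∈ Finset.Icc 1 n \ occT k n P (f-1), j ≤ x :=
    ⟨_, Finset.min'_mem _ hSne, fun x hx => Finset.min'_le _ x hx⟩
  rw [Finset.mem_sdiff, Finset.mem_Icc] at hjmem
  obtain ⟨⟨hj1, hjn⟩, hjF⟩ := hjmem
  have hjmin : ∀ x, 1 ≤ x → x < j → x ∈ occT k n P (f-1) := by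
    intro x hx1 hx2
    by_contra hc
    have : x ∈ Finset.Icc 1 n \ occT k n P (f-1) :=
      Finset.mem_sdiff.2 ⟨Finset.mem_Icc.2 ⟨hx1, by omega⟩, hc⟩
    have := hjle x this
    omega
  have hjk : j + k + 1 ≤ 1 + (P.take (f-1)).count false := by
    by_contra hc
    push_neg at hc
    rcases lt_trichotomy j (1 + (P.take (f-1)).count false) with h | h | h
    · exact hjF (hback j hj1 (by omega) h)
    · exact hjF (by rw [h]; exact hpm)
    · exact hjF (hfwd j h hjn)
  have hjd : j + k ≤ (P.take (f-1)).count false := by omega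
  have jfree : ∀ t ≤ f - 1, j ∉ occT k n P t := by
    intro t ht hc
    exact hjF (occT_mono ht hc)
  -- the j-th Down step
  obtain ⟨τ, hτ1, hτF, hτd, hτd1, hτget, hτmin⟩ :=
    exists_tau (P := P) hj1 (le_trans (by omega) (le_refl ((P.take (f-1)).count false)))
  have hτL : τ ≤ P.length := by omega
  -- all cars before τ park strictly below j
  have lowInv : ∀ t ≤ τ, occT k n P t ⊆ Finset.Icc 1 (j-1) := by
    intro t
    induction t with
    | zero => intro _; rw [occT_zero]; exact Finset.empty_subset _
    | succ t ih =>
      intro ht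
      have iht := ih (by omega)
      rcases hg : P[t]? with _ | b
      · rwa [occT_succ_stall (Or.inl hg)]
      · cases b
        · rwa [occT_succ_stall (Or.inr hg)]
        · obtain ⟨s₀, hs, hins⟩ := up_step_data hokF (by omega) hg
          obtain ⟨hnm, hcases⟩ := naplesStep_some_spec hs
          have hq : 1 + (P.take t).count false ≤ j := by
            have h1 : (P.take t).count false ≤ (P.take (τ-1)).count false :=
              count_take_mono P false (by omega)
            omega
          have hs₀ne : s₀ ≠ j := by
            intro hc
            exact jfree (t+1) (by omega) (hc ▸ hins ▸ Finset.mem_insert_self s₀ _)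
          have hs₀mem : s₀ ∈ Finset.Icc 1 (j-1) := by
            rcases hcases with ⟨-, rfl⟩ | ⟨-, hb1, -, hb3, -⟩ | ⟨hqm, -, hc1, -, hmid⟩
            · exact Finset.mem_Icc.2 ⟨by omega, by omega⟩
            · refine Finset.mem_Icc.2 ⟨hb1, by omega⟩
            · rcases lt_trichotomy s₀ j with hcc | hcc | hcc
              · exact Finset.mem_Icc.2 ⟨by omega, by omega⟩
              · exact absurd hcc hs₀ne
              · exfalso
                rcases lt_or_eq_of_le hq with hd | hd
                · exact jfree t (by omega) (hmid j (by omega) hcc)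
                · exact jfree t (by omega) (by rw [← hd]; exact hqm)
          rw [hins]
          exact Finset.insert_subset hs₀mem iht
  have hccτ : (P.take τ).count true ≤ j - 1 := by
    have := Finset.card_le_card (lowInv τ (le_refl _))
    rw [(occT_card_and_subset hlen hct hlast hokF τ hτF).1] at this
    rw [Nat.card_Icc] at this
    omega
  -- cars from τ onwards never park in [1, j-1]
  have highInv : ∀ t, τ - 1 ≤ t → t ≤ f - 1 →
      occT k n P t ∩ Finset.Icc 1 (j-1) ⊆ occT k n P (τ-1) := by
    intro t ht
    induction t, ht using Nat.le_induction with
    | base => intro _; exact Finset.inter_subset_left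
    | succ t ht ih =>
      intro ht1
      have iht := ih (by omega)
      rcases hg : P[t]? with _ | b
      · rwa [occT_succ_stall (Or.inl hg)]
      · cases b
        · rwa [occT_succ_stall (Or.inr hg)]
        · obtain ⟨s₀, hs, hins⟩ := up_step_data hokF (by omega) hg
          obtain ⟨hnm, hcases⟩ := naplesStep_some_spec hs
          have hq : j ≤ 1 + (P.take t).count false := by
            have h1 : (P.take (τ-1)).count false ≤ (P.take t).count false :=
              count_take_mono P false ht
            omega
          have hs₀ne : s₀ ≠ j := by
            intro hc
            exact jfree (t+1) (by omega) (hc ▸ hins ▸ Finset.mem_insert_self s₀ _)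
          have hqne : 1 + (P.take t).count false ≠ j := by
            intro hc
            rcases hcases with ⟨hnocc, rfl⟩ | ⟨hqm, -⟩ | ⟨hqm, -⟩
            · exact hs₀ne hc
            · exact jfree t (by omega) (hc ▸ hqm)
            · exact jfree t (by omega) (hc ▸ hqm)
          have hs₀gt : j < s₀ := by
            rcases hcases with ⟨-, rfl⟩ | ⟨-, hb1, -, hb3, hmid⟩ | ⟨-, -, hc1, -, -⟩
            · omega
            · rcases lt_trichotomy s₀ j with hcc | hcc | hcc
              · exact absurd (hmid j hcc (by omega)) (jfree t (by omega))
              · exact absurd hcc hs₀ne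
              · exact hcc
            · omega
          rw [hins]
          intro x hx
          rcases Finset.mem_inter.1 hx with ⟨hx1, hx2⟩
          rcases Finset.mem_insert.1 hx1 with rfl | hx1
          · have := Finset.mem_Icc.1 hx2; omega
          · exact iht (Finset.mem_inter.2 ⟨hx1, hx2⟩)
  have hccτ1 : j - 1 ≤ (P.take (τ-1)).count true := by
    have hsub : Finset.Icc 1 (j-1) ⊆ occT k n P (τ-1) := by
      intro x hx
      rcases Finset.mem_Icc.1 hx with ⟨hx1, hx2⟩
      refine highInv (f-1) (by omega) (le_refl _) (Finset.mem_inter.2 ⟨?_, hx⟩)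
      exact hjmin x hx1 (by omega)
    have := Finset.card_le_card hsub
    rw [(occT_card_and_subset hlen hct hlast hokF (τ-1) (by omega)).1, Nat.card_Icc] at this
    omega
  -- counts at τ : exactly j-1 cars, j downs
  have hccτe : (P.take τ).count true = j - 1 ∧ (P.take (τ-1)).count true = j - 1 := by
    have hstep := (step_down hτget).1
    have hτe : τ - 1 + 1 = τ := by omega
    rw [hτe] at hstep
    omega
  have hpsτ1 : psum (P.take (τ-1)) = 0 := by
    have := psum_eq_counts (P.take (τ-1)); omega
  have hpsτ : psum (P.take τ) = -1 := by
    have := psum_eq_counts (P.take τ); omega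
  refine ⟨τ, hτ1, hτL, hpsτ1, hpsτ, ?_⟩
  -- no return to positive within 2k steps
  by_contra hcon
  push_neg at hcon
  obtain ⟨u, hu1, hu2, hu3, hu4⟩ := hcon
  have hexu : ∃ u, τ < u ∧ u ≤ τ + 2 * k ∧ u ≤ P.length ∧ 0 < psum (P.take u) :=
    ⟨u, hu1, hu2, hu3, hu4⟩
  clear hu1 hu2 hu3 hu4 u
  obtain ⟨u₀, ⟨hu1, hu2, hu3, hu4⟩, hu₀min'⟩ : ∃ u₀, (τ < u₀ ∧ u₀ ≤ τ + 2 * k ∧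
      u₀ ≤ P.length ∧ 0 < psum (P.take u₀)) ∧ ∀ v < u₀,
      ¬(τ < v ∧ v ≤ τ + 2 * k ∧ v ≤ P.length ∧ 0 < psum (P.take v)) :=
    ⟨Nat.find hexu, Nat.find_spec hexu, fun v hv => Nat.find_min hexu hv⟩
  have hu₀min : ∀ v, τ < v → v ≤ τ + 2 * k → v ≤ P.length → v < u₀ → psum (P.take v) ≤ 0 := by
    intro v h1 h2 h3 h4
    have := hu₀min' v h4
    push_neg at this
    exact this h1 h2 h3
  have hprev : psum (P.take (u₀ - 1)) ≤ 0 := by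
    rcases Nat.lt_or_ge τ (u₀ - 1) with hc | hc
    · exact hu₀min (u₀-1) hc (by omega) (by omega) (by omega)
    · have : u₀ - 1 = τ := by omega
      rw [this, hpsτ]; omega
  obtain ⟨b, hb⟩ := exists_getElem (show u₀ - 1 < P.length by omega)
  have hu₀e : u₀ - 1 + 1 = u₀ := by omega
  have hgu : P[u₀-1]? = some true := by
    cases b
    · exfalso
      have := (step_down hb).2.2
      rw [hu₀e] at this
      omega
    · exact hb
  have hpsu : psum (P.take u₀) = 1 ∧ psum (P.take (u₀-1)) = 0 := by
    have := (step_up hgu).2.2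
    rw [hu₀e] at this
    omega
  -- arithmetic: D := downs at u₀ satisfies D + 1 ≤ j + k
  have hcntu : (P.take u₀).count true + (P.take u₀).count false = u₀ := counts_add_eq (by omega)
  have hcntτ : (P.take τ).count true + (P.take τ).count false = τ := counts_add_eq hτL
  have hpeu := psum_eq_counts (P.take u₀)
  have hDle : (P.take u₀).count false + 1 ≤ j + k := by omega
  have hDge : j ≤ (P.take u₀).count false := by
    have := count_take_mono P false (le_of_lt hu1); omega
  -- u₀ is before the failure
  have hu₀F : u₀ ≤ f - 1 := by
    by_contra hc
    push_neg at hc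
    have := count_take_mono P false (show f - 1 ≤ u₀ by omega)
    omega
  -- cars arriving in (τ, u₀] park in (j, D+1]
  have windowInv : ∀ t, τ ≤ t → t ≤ u₀ →
      occT k n P t \ occT k n P τ ⊆ Finset.Icc (j+1) ((P.take u₀).count false + 1) := by
    intro t ht
    induction t, ht using Nat.le_induction with
    | base => intro _; simp
    | succ t ht ih =>
      intro ht1
      have iht := ih (by omega)
      rcases hg : P[t]? with _ | b
      · rwa [occT_succ_stall (Or.inl hg)]
      · cases b
        · rwa [occT_succ_stall (Or.inr hg)]
        · obtain ⟨s₀, hs, hins⟩ := up_step_data hokF (by omega) hg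
          obtain ⟨hnm, hcases⟩ := naplesStep_some_spec hs
          have hqlo : j ≤ (P.take t).count false := by
            have := count_take_mono P false ht; omega
          have hqhi : (P.take t).count false ≤ (P.take u₀).count false :=
            count_take_mono P false (by omega)
          have hs₀ne : s₀ ≠ j := by
            intro hc
            exact jfree (t+1) (by omega) (hc ▸ hins ▸ Finset.mem_insert_self s₀ _)
          have hs₀mem : s₀ ∈ Finset.Icc (j+1) ((P.take u₀).count false + 1) := by
            rcases hcases with ⟨-, rfl⟩ | ⟨-, hb1, hb2, hb3, hmid⟩ | ⟨-, hbf, hc1, -, -⟩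
            · exact Finset.mem_Icc.2 ⟨by omega, by omega⟩
            · rcases lt_trichotomy s₀ j with hcc | hcc | hcc
              · exact absurd (hmid j hcc (by omega)) (jfree t (by omega))
              · exact absurd hcc hs₀ne
              · exact Finset.mem_Icc.2 ⟨by omega, by omega⟩
            · exfalso
              exact jfree t (by omega) (hbf j hj1 (by omega) (by omega))
          rw [hins]
          intro x hx
          rcases Finset.mem_sdiff.1 hx with ⟨hx1, hx2⟩
          rcases Finset.mem_insert.1 hx1 with rfl | hx1
          · exact hs₀mem
          · exact iht (Finset.mem_sdiff.2 ⟨hx1, hx2⟩)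
  -- pigeonhole
  have hsubτu : occT k n P τ ⊆ occT k n P u₀ := occT_mono (le_of_lt hu1)
  have hcard := Finset.card_le_card (windowInv u₀ (le_of_lt hu1) (le_refl _))
  rw [Finset.card_sdiff_of_subset hsubτu] at hcard
  rw [(occT_card_and_subset hlen hct hlast hokF u₀ hu₀F).1,
    (occT_card_and_subset hlen hct hlast hokF τ (by omega)).1, Nat.card_Icc] at hcard
  omega

end MainLemmas

/-- Characterization of ascending `k`-Naples parking functions.
Let `k ≥ 1` and let `P` be a `k`-Dyck path of length `n`, with corresponding ascending
parking preference `prefsOfPath P`.  Then `prefsOfPath P` is a `k`-Naples parking function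
iff every Down step taking the partial sum from `0` to `-1` is followed, within the next
`2k` steps, by a step after which the partial sum of `P` is strictly positive. -/
theorem statement2 (k n : ℕ) (hk : 1 ≤ k) (P : List Bool) (hP : IsKDyckPath k n P) :
    IsNaplesPF k n (prefsOfPath P) ↔
      ∀ t : ℕ, 1 ≤ t → t ≤ P.length → psum (P.take (t - 1)) = 0 →
        psum (P.take t) = -1 →
        ∃ u : ℕ, t < u ∧ u ≤ t + 2 * k ∧ u ≤ P.length ∧ 0 < psum (P.take u) := by
  obtain ⟨hlen, hct, hbound, hlast⟩ := hP
  constructor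
  · rintro ⟨-, hpark⟩
    exact dir_forward hlen hct hlast hk (parksAll_iff_okT.1 hpark)
  · intro hRHS
    refine ⟨isParkingPref_of_path hlen hct hlast, ?_⟩
    rw [parksAll_iff_okT]
    by_contra hnot
    obtain ⟨t, h1, h2, h3, h4, h5⟩ := dir_backward hlen hct hlast hk hnot
    obtain ⟨u, hu1, hu2, hu3, hu4⟩ := hRHS t h1 h2 h3 h4
    exact absurd hu4 (not_lt.2 (h5 u hu1 hu2 hu3))
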